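/- An n×n real matrix M is a P-matrix (all principal minors positive) if and only if for every nonzero vector x ∈ ℝⁿ there exists an index j with x_j · (Mx)_j > 0. -/

import Mathlib

open Matrix

/-- A square real matrix is a P-matrix if all of its principal minors are positive. -/
def IsPMat {n : ℕ} (M : Matrix (Fin n) (Fin n) ℝ) : Prop :=
  ∀ S : Finset (Fin n),
    0 < (M.submatrix (Subtype.val : {i // i ∈ S} → Fin n) Subtype.val).det

section Aux

variable {m : Type*} [Fintype m] [DecidableEq m]

/-- Determinant of the matrix obtained by replacing the rows in `s` by identity rows. -/
lemma det_piecewise_one (A : Matrix m m ℝ) (s : Finset m) :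
    Matrix.det (s.piecewise (1 : Matrix m m ℝ) A)
      = (A.submatrix (Subtype.val : {i // ¬ i ∈ s} → m) Subtype.val).det := by
  classical
  set e := Equiv.sumCompl (· ∈ s) with he
  have h1 : (Matrix.submatrix (s.piecewise (1 : Matrix m m ℝ) A) e e)
      = fromBlocks 1 0 (A.submatrix Subtype.val Subtype.val)
          (A.submatrix Subtype.val Subtype.val) := by
    ext i j
    simp only [Matrix.submatrix, Matrix.of_apply]
    cases i with
    | inl i =>
      have hi : (i : m) ∈ s := i.2
      cases j with
      | inl j =>
        simp only [submatrix_apply, he, Equiv.sumCompl_apply_inl,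
          Finset.piecewise, hi, fromBlocks_apply₁₁]
        show (1 : Matrix m m ℝ) (i : m) (j : m) = (1 : Matrix s s ℝ) i j
        rw [Matrix.one_apply, Matrix.one_apply]
        exact if_congr Subtype.ext_iff.symm rfl rfl
      | inr j =>
        have hj : ¬ (j : m) ∈ s := j.2
        have hne : (i : m) ≠ (j : m) := fun h => hj (h ▸ hi)
        simp only [submatrix_apply, he, Equiv.sumCompl_apply_inl,
          Equiv.sumCompl_apply_inr, Finset.piecewise, hi,
          fromBlocks_apply₁₂]
        simp [Matrix.one_apply]
        exact hne
    | inr i =>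
      have hi : ¬ (i : m) ∈ s := i.2
      cases j with
      | inl j =>
        simp [he, Finset.piecewise, hi]
      | inr j =>
        simp [he, Finset.piecewise, hi]
  calc Matrix.det (s.piecewise (1 : Matrix m m ℝ) A)
      = Matrix.det (Matrix.submatrix (s.piecewise (1 : Matrix m m ℝ) A) e e) :=
        (det_submatrix_equiv_self e _).symm
    _ = (fromBlocks 1 0 (A.submatrix Subtype.val Subtype.val)
          (A.submatrix (Subtype.val : {i // ¬ i ∈ s} → m) Subtype.val)).det := by rw [h1]
    _ = (A.submatrix (Subtype.val : {i // ¬ i ∈ s} → m) Subtype.val).det := by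
        rw [det_fromBlocks_zero₁₂, det_one, one_mul]

lemma minor_compl (A : Matrix m m ℝ) (s : Finset m) :
    (A.submatrix (Subtype.val : {i // ¬ i ∈ s} → m) Subtype.val).det
      = (A.submatrix (Subtype.val : {i // i ∈ sᶜ} → m) Subtype.val).det := by
  classical
  have hmem : ∀ i : m, i ∈ sᶜ ↔ ¬ i ∈ s := fun i => Finset.mem_compl
  let φ : {i // i ∈ sᶜ} ≃ {i // ¬ i ∈ s} := Equiv.subtypeEquivRight hmem
  have : (A.submatrix (Subtype.val : {i // ¬ i ∈ s} → m) Subtype.val).submatrix φ φ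
      = A.submatrix (Subtype.val : {i // i ∈ sᶜ} → m) Subtype.val := by
    ext i j; rfl
  rw [← det_submatrix_equiv_self φ
    (A.submatrix (Subtype.val : {i // ¬ i ∈ s} → m) Subtype.val), this]

/-- If all principal minors of `A` are positive, then for any nonnegative diagonal `d`,
`det (A + diagonal d) > 0`. -/
lemma det_add_diagonal_pos (A : Matrix m m ℝ)
    (hP : ∀ s : Finset m,
      0 < (A.submatrix (Subtype.val : {i // i ∈ s} → m) Subtype.val).det)
    (d : m → ℝ) (hd : ∀ i, 0 ≤ d i) :
    0 < (A + Matrix.diagonal d).det := by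
  classical
  have hpiece : ∀ s : Finset m,
      0 < Matrix.det (s.piecewise (1 : Matrix m m ℝ) A) := by
    intro s
    rw [det_piecewise_one, minor_compl]
    exact hP sᶜ
  have key : (A + Matrix.diagonal d).det
      = ∑ s : Finset m, (∏ i ∈ s, d i) * Matrix.det (s.piecewise (1 : Matrix m m ℝ) A) := by
    have h0 : ∀ X : Matrix m m ℝ, X.det
        = (Matrix.detRowAlternating :
            (m → ℝ) [⋀^m]→ₗ[ℝ] ℝ).toMultilinearMap X := fun _ => rfl
    rw [show A + Matrix.diagonal d = Matrix.diagonal d + A from add_comm _ _,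
      h0]
    erw [(Matrix.detRowAlternating :
      (m → ℝ) [⋀^m]→ₗ[ℝ] ℝ).toMultilinearMap.map_add_univ (Matrix.diagonal d) A]
    refine Finset.sum_congr rfl fun s _ => ?_
    have h2 : s.piecewise (Matrix.diagonal d) A
        = s.piecewise (fun i => d i • (s.piecewise (1 : Matrix m m ℝ) A) i)
            (s.piecewise (1 : Matrix m m ℝ) A) := by
      funext i
      by_cases hi : i ∈ s
      · erw [Finset.piecewise_eq_of_mem _ _ _ hi, Finset.piecewise_eq_of_mem _ _ _ hi,
          Finset.piecewise_eq_of_mem _ _ _ hi]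
        funext j
        simp [Matrix.diagonal_apply, Matrix.one_apply, mul_ite]
      · erw [Finset.piecewise_eq_of_notMem _ _ _ hi,
          Finset.piecewise_eq_of_notMem _ _ _ hi,
          Finset.piecewise_eq_of_notMem _ _ _ hi]
    erw [h2, (Matrix.detRowAlternating :
      (m → ℝ) [⋀^m]→ₗ[ℝ] ℝ).toMultilinearMap.map_piecewise_smul d
      (s.piecewise (1 : Matrix m m ℝ) A) s, ← h0, smul_eq_mul]
  rw [key]
  refine Finset.sum_pos' (fun s _ => ?_) ⟨∅, Finset.mem_univ _, ?_⟩
  · exact mul_nonneg (Finset.prod_nonneg fun i _ => hd i) (hpiece s).le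
  · simpa using hpiece ∅

lemma mulVec_submatrix_of_support (M : Matrix m m ℝ) (s : Finset m) (x : m → ℝ)
    (hx : ∀ i ∉ s, x i = 0) (j : {i // i ∈ s}) :
    Matrix.mulVec (M.submatrix (Subtype.val : {i // i ∈ s} → m) Subtype.val)
        (fun i : {i // i ∈ s} => x i.val) j
      = M.mulVec x j.val := by
  classical
  simp only [Matrix.mulVec, dotProduct, Matrix.submatrix_apply]
  have h1 : (∑ k : {i // i ∈ s}, M j.val k.val * x k.val)
      = ∑ k ∈ s, M j.val k * x k :=
    Finset.sum_coe_sort s (fun k => M j.val k * x k)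
  rw [h1]
  exact Finset.sum_subset (Finset.subset_univ s)
    (fun k _ hk => by rw [hx k hk, mul_zero])

/-- The sign non-reversal property is inherited by principal submatrices. -/
lemma prop_submatrix (M : Matrix m m ℝ)
    (h : ∀ x : m → ℝ, x ≠ 0 → ∃ j, 0 < x j * M.mulVec x j) (s : Finset m) :
    ∀ y : {i // i ∈ s} → ℝ, y ≠ 0 →
      ∃ j, 0 < y j * (M.submatrix (Subtype.val : {i // i ∈ s} → m)
        Subtype.val).mulVec y j := by
  classical
  intro y hy
  set x : m → ℝ := fun i => if hi : i ∈ s then y ⟨i, hi⟩ else 0 with hxdef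
  have hx0 : ∀ i ∉ s, x i = 0 := fun i hi => dif_neg hi
  have hxy : (fun i : {i // i ∈ s} => x i.val) = y := by
    funext i
    show (if hi : i.val ∈ s then y ⟨i.val, hi⟩ else 0) = y i
    rw [dif_pos i.2]
  have hxne : x ≠ 0 := by
    obtain ⟨j0, hj0⟩ := Function.ne_iff.mp hy
    intro hc
    apply hj0
    have h0 : x j0.val = 0 := congrFun hc j0.val
    rw [show x j0.val = y j0 from congrFun hxy j0] at h0
    exact h0
  obtain ⟨j, hj⟩ := h x hxne
  have hjs : j ∈ s := by
    by_contra hjs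
    rw [hx0 j hjs, zero_mul] at hj
    exact lt_irrefl 0 hj
  refine ⟨⟨j, hjs⟩, ?_⟩
  have h1 := mulVec_submatrix_of_support M s x hx0 ⟨j, hjs⟩
  rw [hxy] at h1
  rw [h1]
  have h2 : y ⟨j, hjs⟩ = x j := (congrFun hxy ⟨j, hjs⟩).symm
  rw [h2]
  exact hj

/-- A matrix with the sign non-reversal property has positive determinant. -/
lemma prop_det_pos (A : Matrix m m ℝ)
    (h : ∀ x : m → ℝ, x ≠ 0 → ∃ j, 0 < x j * A.mulVec x j) : 0 < A.det := by
  classical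
  set f : ℝ → ℝ := fun t => ((1 - t) • (1 : Matrix m m ℝ) + t • A).det with hf
  have hcont : Continuous f := by
    apply Continuous.matrix_det
    exact ((continuous_const.sub continuous_id).smul continuous_const).add
      (continuous_id.smul continuous_const)
  have hne : ∀ t ∈ Set.Icc (0 : ℝ) 1, f t ≠ 0 := by
    rintro t ⟨ht0, ht1⟩ hdet
    rcases eq_or_lt_of_le ht0 with h' | htpos
    · rw [hf] at hdet
      simp only [← h', sub_zero, one_smul, zero_smul, add_zero, det_one] at hdet
      exact one_ne_zero hdet
    · obtain ⟨v, hv, hMv⟩ := (Matrix.exists_mulVec_eq_zero_iff).mpr hdet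
      obtain ⟨j, hj⟩ := h v hv
      have hcomp : (1 - t) * v j + t * A.mulVec v j = 0 := by
        have := congrFun hMv j
        simpa [Matrix.add_mulVec, Matrix.smul_mulVec, Matrix.one_mulVec,
          smul_eq_mul] using this
      have hcv : ((1 - t) * v j + t * A.mulVec v j) * v j = 0 := by
        rw [hcomp, zero_mul]
      nlinarith [mul_pos htpos hj, mul_nonneg (sub_nonneg.mpr ht1) (sq_nonneg (v j)),
        sq_nonneg (v j)]
  by_contra hA
  push_neg at hA
  have hf0 : f 0 = 1 := by simp [hf]
  have hf1 : f 1 = A.det := by simp [hf]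
  have hmem : (0 : ℝ) ∈ Set.Icc (f 1) (f 0) := by
    rw [hf0, hf1]; exact ⟨hA, zero_le_one⟩
  obtain ⟨t, ht, hft⟩ :=
    intermediate_value_Icc' (by norm_num : (0 : ℝ) ≤ 1) hcont.continuousOn hmem
  exact hne t ht hft

/-- Principal minors of principal submatrices are principal minors. -/
lemma minor_minor (M : Matrix m m ℝ) (S : Finset m) (T : Finset {i // i ∈ S}) :
    ((M.submatrix (Subtype.val : {i // i ∈ S} → m) Subtype.val).submatrix
        (Subtype.val : {j // j ∈ T} → {i // i ∈ S}) Subtype.val).det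
      = (M.submatrix (Subtype.val : {i // i ∈ T.image Subtype.val} → m)
          Subtype.val).det := by
  classical
  have hSmem : ∀ i : m, i ∈ T.image Subtype.val → i ∈ S := by
    intro i hi
    obtain ⟨b, _, hb⟩ := Finset.mem_image.mp hi
    exact hb ▸ b.2
  have hTmem : ∀ (i : m) (hi : i ∈ T.image Subtype.val),
      (⟨i, hSmem i hi⟩ : {i // i ∈ S}) ∈ T := by
    intro i hi
    obtain ⟨b, hbT, hb⟩ := Finset.mem_image.mp hi
    have : b = ⟨i, hSmem i hi⟩ := Subtype.ext hb
    exact this ▸ hbT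
  let φ : {j // j ∈ T} ≃ {i // i ∈ T.image Subtype.val} :=
    { toFun := fun j => ⟨j.val.val, Finset.mem_image.mpr ⟨j.val, j.2, rfl⟩⟩
      invFun := fun i => ⟨⟨i.val, hSmem i.val i.2⟩, hTmem i.val i.2⟩
      left_inv := fun j => by ext; rfl
      right_inv := fun i => by ext; rfl }
  have heq : (M.submatrix (Subtype.val : {i // i ∈ T.image Subtype.val} → m)
      Subtype.val).submatrix φ φ
      = (M.submatrix (Subtype.val : {i // i ∈ S} → m) Subtype.val).submatrix
        (Subtype.val : {j // j ∈ T} → {i // i ∈ S}) Subtype.val := by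
    ext i j; rfl
  rw [← det_submatrix_equiv_self φ
    (M.submatrix (Subtype.val : {i // i ∈ T.image Subtype.val} → m) Subtype.val), heq]

end Aux

theorem pMatrix_iff_sign_reversal {n : ℕ} (M : Matrix (Fin n) (Fin n) ℝ) :
    IsPMat M ↔ ∀ x : Fin n → ℝ, x ≠ 0 → ∃ j, 0 < x j * M.mulVec x j := by
  classical
  constructor
  · intro hP x hx
    by_contra hc
    push_neg at hc
    set S : Finset (Fin n) := Finset.univ.filter (fun i => x i ≠ 0) with hS
    set A := M.submatrix (Subtype.val : {i // i ∈ S} → Fin n) Subtype.val with hA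
    set y : {i // i ∈ S} → ℝ := fun i => x i.val with hy
    have hx0 : ∀ i ∉ S, x i = 0 := by
      intro i hi
      by_contra h'
      exact hi (Finset.mem_filter.mpr ⟨Finset.mem_univ _, h'⟩)
    have hyne : ∀ j, y j ≠ 0 := fun j => (Finset.mem_filter.mp j.2).2
    have hAy : ∀ j : {i // i ∈ S}, A.mulVec y j = M.mulVec x j.val := by
      intro j
      exact mulVec_submatrix_of_support M S x hx0 j
    have hyAy : ∀ j, y j * A.mulVec y j ≤ 0 := by
      intro j
      rw [hAy j]
      exact hc j.val
    have hAP : ∀ T : Finset {i // i ∈ S},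
        0 < (A.submatrix (Subtype.val : {j // j ∈ T} → {i // i ∈ S})
          Subtype.val).det := by
      intro T
      rw [hA, minor_minor]
      exact hP _
    set d : {i // i ∈ S} → ℝ := fun j => -(A.mulVec y j) / y j with hd
    have hd0 : ∀ j, 0 ≤ d j := by
      intro j
      have hpos : 0 < y j * y j := mul_self_pos.mpr (hyne j)
      have hdj : d j * (y j * y j) = -(y j * A.mulVec y j) := by
        simp only [hd]
        rw [show -(A.mulVec y j) / y j * (y j * y j)
            = -(A.mulVec y j) / y j * y j * y j by ring,
          div_mul_cancel₀ _ (hyne j)]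
        ring
      by_contra hneg
      push_neg at hneg
      have hlt : d j * (y j * y j) < 0 := mul_neg_of_neg_of_pos hneg hpos
      rw [hdj] at hlt
      exact absurd hlt (not_lt.mpr (neg_nonneg.mpr (hyAy j)))
    have hyne0 : y ≠ 0 := by
      obtain ⟨i, hi⟩ := Function.ne_iff.mp hx
      have hiS : i ∈ S := Finset.mem_filter.mpr ⟨Finset.mem_univ _, hi⟩
      exact Function.ne_iff.mpr ⟨⟨i, hiS⟩, hi⟩
    have hdet0 : (A + Matrix.diagonal d).det = 0 := by
      apply (Matrix.exists_mulVec_eq_zero_iff).mp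
      refine ⟨y, hyne0, ?_⟩
      funext j
      rw [Matrix.add_mulVec]
      simp only [Pi.add_apply, Pi.zero_apply]
      rw [Matrix.mulVec_diagonal]
      have hdy : d j * y j = -(A.mulVec y j) := by
        simp only [hd]
        rw [div_mul_cancel₀ _ (hyne j)]
      rw [hdy]
      ring
    exact absurd hdet0 (ne_of_gt (det_add_diagonal_pos A hAP d hd0))
  · intro h S
    exact prop_det_pos _ (prop_submatrix M h S)
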